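/- arXiv:1708.07617 — 3 statements merged into one kernel-verified Lean document; each statement's English description precedes it below -/
import Mathlib

section
/- Let A be a ℂ-algebra with elements a, b, c, d satisfying the SL₂^q relations: ba = qab, ca = qac, db = qbd, dc = qcd, bc = cb, ad − q⁻¹bc = da − qbc, and ad − q⁻¹bc = 1. Then for the induced action ρ₂ on degree-2 homogeneous polynomials in q-commuting variables X, Y (with YX = qXY, X and Y commuting with A), one has Trace ρ₂(a,b;c,d) = (a + d)² − 1. -/
/-- The quantum `A`-plane `A[X,Y]^q` in degreewise coordinates: an element is a finitely
supported family of coefficients in `A`, indexed by the monomials `X^i Y^j`. -/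
abbrev QPlane (A : Type*) [Ring A] := (ℕ × ℕ) →₀ A

/-- Multiplication in the quantum plane: the variables `X`, `Y` commute with all
coefficients in `A` and satisfy `Y X = q X Y`, so that
`(α X^i Y^j)(β X^k Y^l) = q^{jk} (α β) X^{i+k} Y^{j+l}`. -/
noncomputable def qmul {A : Type*} [Ring A] [Algebra ℂ A] (q : ℂ)
    (f g : QPlane A) : QPlane A :=
  f.sum fun p α => g.sum fun r β =>
    Finsupp.single (p.1 + r.1, p.2 + r.2) (q ^ (p.2 * r.1) • (α * β))

/-- Powers in the quantum plane. -/
noncomputable def qpow {A : Type*} [Ring A] [Algebra ℂ A] (q : ℂ)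
    (f : QPlane A) : ℕ → QPlane A
  | 0 => Finsupp.single (0, 0) 1
  | m + 1 => qmul q f (qpow q f m)

/-- The image of the basis monomial `X^{n−u} Y^u` under the action `ρ_n` of the matrix
`(a, b; c, d)`, which sends `X ↦ aX + bY`, `Y ↦ cX + dY` and is extended
multiplicatively: it is `(aX + bY)^{n−u} (cX + dY)^u`. -/
noncomputable def rhoImage {A : Type*} [Ring A] [Algebra ℂ A] (q : ℂ)
    (a b c d : A) (n u : ℕ) : QPlane A :=
  qmul q
    (qpow q (Finsupp.single (1, 0) a + Finsupp.single (0, 1) b) (n - u))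
    (qpow q (Finsupp.single (1, 0) c + Finsupp.single (0, 1) d) u)

/-- The trace of `ρ_n(a, b; c, d)`: the sum over `u` of the coefficient of
`X^{n−u} Y^u` in the image of `X^{n−u} Y^u`. -/
noncomputable def traceRho {A : Type*} [Ring A] [Algebra ℂ A] (q : ℂ)
    (a b c d : A) (n : ℕ) : A :=
  ∑ u ∈ Finset.range (n + 1), rhoImage q a b c d n u (n - u, u)

/-- For `(a, b; c, d) ∈ SL₂^q(A)`, the trace of `ρ₂` equals `(a + d)² − 1`. -/
theorem traceRho_two {A : Type*} [Ring A] [Algebra ℂ A] (q : ℂ) (a b c d : A)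
    (hba : b * a = q • (a * b)) (hca : c * a = q • (a * c))
    (hdb : d * b = q • (b * d)) (hdc : d * c = q • (c * d))
    (hbc : b * c = c * b)
    (hdet : a * d - q⁻¹ • (b * c) = 1)
    (hdet' : a * d - q⁻¹ • (b * c) = d * a - q • (b * c)) :
    traceRho q a b c d 2 = (a + d) ^ 2 - 1 := by
  have h1 : d * a = 1 + q • (b * c) := eq_add_of_sub_eq (hdet'.symm.trans hdet)
  simp only [traceRho, rhoImage, qpow, qmul, Finset.sum_range_succ, Finset.sum_range_zero]
  simp [Finsupp.sum_add_index, Finsupp.sum_single_index, Finsupp.single_apply, mul_add,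
    add_mul, Prod.ext_iff, qpow, -Finsupp.single_mul]
  rw [pow_two, add_mul, mul_add, mul_add, h1]
  abel
end

section
/- Let A be a ℂ-algebra with elements a, b, c, d satisfying the SL₂^q relations (ba = qab, ca = qac, db = qbd, dc = qcd, bc = cb, ad − q⁻¹bc = da − qbc = 1). Then Trace ρ₃(a,b;c,d) = (a + d)³ − 2(a + d), where ρ₃ is the induced action on degree-3 homogeneous polynomials in the quantum plane. -/
lemma qmul_single_single {A : Type*} [Ring A] [Algebra ℂ A] (q : ℂ)
    (p r : ℕ × ℕ) (α β : A) :
    qmul q (Finsupp.single p α) (Finsupp.single r β)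
      = Finsupp.single (p.1 + r.1, p.2 + r.2) (q ^ (p.2 * r.1) • (α * β)) := by
  unfold qmul
  rw [Finsupp.sum_single_index, Finsupp.sum_single_index] <;> simp [Finsupp.sum]

lemma qmul_add_left {A : Type*} [Ring A] [Algebra ℂ A] (q : ℂ)
    (f g h : QPlane A) : qmul q (f + g) h = qmul q f h + qmul q g h := by
  unfold qmul
  apply Finsupp.sum_add_index' <;> intros <;> simp [Finsupp.sum, add_mul, smul_add,
    Finsupp.single_add, Finset.sum_add_distrib]

lemma qmul_add_right {A : Type*} [Ring A] [Algebra ℂ A] (q : ℂ)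
    (f g h : QPlane A) : qmul q f (g + h) = qmul q f g + qmul q f h := by
  unfold qmul
  rw [← Finsupp.sum_add]
  apply Finsupp.sum_congr
  intro p _
  apply Finsupp.sum_add_index' <;> intros <;> simp [mul_add, smul_add, Finsupp.single_add]

/-- For `(a, b; c, d) ∈ SL₂^q(A)`, the trace of `ρ₃` equals `(a + d)³ − 2(a + d)`. -/
theorem traceRho_three {A : Type*} [Ring A] [Algebra ℂ A] (q : ℂ) (a b c d : A)
    (hba : b * a = q • (a * b)) (hca : c * a = q • (a * c))
    (hdb : d * b = q • (b * d)) (hdc : d * c = q • (c * d))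
    (hbc : b * c = c * b)
    (hdet : a * d - q⁻¹ • (b * c) = 1)
    (hdet' : a * d - q⁻¹ • (b * c) = d * a - q • (b * c)) :
    traceRho q a b c d 3 = (a + d) ^ 3 - 2 * (a + d) := by
  have hda : d * a = 1 + q • (b * c) :=
    eq_add_of_sub_eq (hdet'.symm.trans hdet)
  have ebca : (b * c) * a = (q * q) • (a * (b * c)) := by
    rw [mul_assoc, hca, mul_smul_comm, ← mul_assoc, hba, smul_mul_assoc, mul_assoc, smul_smul]
  have edbc : d * (b * c) = (q * q) • (b * (c * d)) := by
    rw [← mul_assoc, hdb, smul_mul_assoc, mul_assoc, hdc, mul_smul_comm, smul_smul]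
  have e1 : b * a * c = q • (a * (b * c)) := by
    rw [hba, smul_mul_assoc, mul_assoc]
  have e2 : b * (d * c) = q • (b * (c * d)) := by
    rw [hdc, mul_smul_comm]
  have e3 : a * (d * a) = a + q • (a * (b * c)) := by
    rw [hda, mul_add, mul_one, mul_smul_comm]
  have e4 : d * (a * a) = a + (q * (q * q)) • (a * (b * c)) := by
    rw [← mul_assoc, hda, add_mul, one_mul, smul_mul_assoc, ebca, smul_smul]
  have e5 : d * (a * d) = d + q • (b * (c * d)) := by
    rw [← mul_assoc, hda, add_mul, one_mul, smul_mul_assoc, mul_assoc]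
  have e6 : d * (d * a) = d + (q * (q * q)) • (b * (c * d)) := by
    rw [hda, mul_add, mul_one, mul_smul_comm, edbc, smul_smul]
  have expand : (a + d) ^ 3 =
      a * (a * a) + a * (a * d) + a * (d * a) + a * (d * d)
      + d * (a * a) + d * (a * d) + d * (d * a) + d * (d * d) := by
    noncomm_ring
  have eab : a * b * c = a * (b * c) := mul_assoc a b c
  have ead : a * a * d = a * (a * d) := mul_assoc a a d
  simp only [traceRho, rhoImage, qpow, Finset.sum_range_succ, Finset.sum_range_zero, Nat.sub_self]
  norm_num
  simp only [qmul_add_left, qmul_add_right, qmul_single_single]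
  simp only [Finsupp.add_apply, Finsupp.single_apply]
  norm_num
  rw [e1, e2, eab, ead, expand, e3, e4, e5, e6, two_mul]
  module
end

section
/- Let A be a ℂ-algebra with ad − q⁻¹bc = 1, ba = qab, ca = qac, db = qbd, dc = qcd, bc = cb, and ad − q⁻¹bc = da − qbc. Then Trace ρ_n(a,b;c,d) = S_n(a + d) for every n ≥ 0, where ρ_n is the induced action on degree-n homogeneous polynomials of the quantum plane and S_n is the n-th normalized Chebyshev polynomial of the second kind. -/
/-- The normalized Chebyshev polynomial of the second kind, evaluated in a ring:
`S_{n+1}(t) = t·S_n(t) − S_{n−1}(t)`, `S_1(t) = t`, `S_0(t) = 1`. -/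
def chebS {A : Type*} [Ring A] : ℕ → A → A
  | 0, _ => 1
  | 1, t => t
  | n + 2, t => t * chebS (n + 1) t - chebS n t

namespace QT

open Finsupp

variable {A : Type*} [Ring A] [Algebra ℂ A] (q : ℂ)

@[simp] theorem qmul_zero_left (g : QPlane A) : qmul q 0 g = 0 := by
  simp [qmul]

@[simp] theorem qmul_zero_right (f : QPlane A) : qmul q f 0 = 0 := by
  simp [qmul]

theorem qmul_single_single (p r : ℕ × ℕ) (α β : A) :
    qmul q (Finsupp.single p α) (Finsupp.single r β)
      = Finsupp.single (p.1 + r.1, p.2 + r.2) (q ^ (p.2 * r.1) • (α * β)) := by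
  unfold qmul
  rw [Finsupp.sum_single_index, Finsupp.sum_single_index]
  · simp
  · simp

theorem qmul_add_left (f g h : QPlane A) :
    qmul q (f + g) h = qmul q f h + qmul q g h := by
  unfold qmul
  apply Finsupp.sum_add_index'
  · intro p; simp
  · intro p α β
    rw [← Finsupp.sum_add]
    congr 1
    ext r γ
    rw [add_mul, smul_add, Finsupp.single_add]

theorem qmul_add_right (f g h : QPlane A) :
    qmul q f (g + h) = qmul q f g + qmul q f h := by
  unfold qmul
  rw [← Finsupp.sum_add]
  congr 1
  funext p α
  apply Finsupp.sum_add_index'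
  · intro r; simp
  · intro r β γ
    rw [mul_add, smul_add, Finsupp.single_add]

theorem qmul_smul_left (x : ℂ) (f g : QPlane A) :
    qmul q (x • f) g = x • qmul q f g := by
  unfold qmul
  rw [Finsupp.sum_smul_index' (by intro p; simp), Finsupp.smul_sum]
  congr 1
  funext p α
  rw [Finsupp.smul_sum]
  congr 1
  funext r β
  rw [smul_mul_assoc, smul_comm, Finsupp.smul_single]

theorem qmul_smul_right (x : ℂ) (f g : QPlane A) :
    qmul q f (x • g) = x • qmul q f g := by
  unfold qmul
  rw [Finsupp.smul_sum]
  congr 1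
  funext p α
  rw [Finsupp.sum_smul_index' (by intro r; simp), Finsupp.smul_sum]
  congr 1
  funext r β
  rw [mul_smul_comm, smul_comm, Finsupp.smul_single]

theorem qmul_sub_left (f g h : QPlane A) :
    qmul q (f - g) h = qmul q f h - qmul q g h := by
  rw [eq_sub_iff_add_eq, ← qmul_add_left, sub_add_cancel]

theorem qmul_sub_right (f g h : QPlane A) :
    qmul q f (g - h) = qmul q f g - qmul q f h := by
  rw [eq_sub_iff_add_eq, ← qmul_add_right, sub_add_cancel]

theorem qmul_assoc (f g h : QPlane A) :
    qmul q (qmul q f g) h = qmul q f (qmul q g h) := by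
  induction f using Finsupp.induction with
  | zero => simp
  | single_add p α f _ _ ihf =>
    rw [qmul_add_left, qmul_add_left, qmul_add_left, ihf]
    congr 1
    clear ihf
    induction g using Finsupp.induction with
    | zero => simp
    | single_add r β g _ _ ihg =>
      rw [qmul_add_right, qmul_add_left, qmul_add_left, qmul_add_right, ihg]
      congr 1
      clear ihg
      induction h using Finsupp.induction with
      | zero => simp
      | single_add s γ h _ _ ihh =>
        rw [qmul_add_right, qmul_add_right, qmul_add_right, ihh]
        congr 1
        rw [qmul_single_single, qmul_single_single, qmul_single_single,
          qmul_single_single]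
        simp only [smul_mul_assoc, mul_smul_comm, smul_smul, ← pow_add,
          mul_assoc, add_assoc]
        congr 3
        ring
theorem qmul_one_left (f : QPlane A) :
    qmul q (Finsupp.single (0, 0) (1 : A)) f = f := by
  induction f using Finsupp.induction with
  | zero => simp
  | single_add r β f _ _ ihf =>
    rw [qmul_add_right, ihf, qmul_single_single]
    simp

theorem qmul_one_right (f : QPlane A) :
    qmul q f (Finsupp.single (0, 0) (1 : A)) = f := by
  induction f using Finsupp.induction with
  | zero => simp
  | single_add r β f _ _ ihf =>
    rw [qmul_add_left, ihf, qmul_single_single]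
    simp

theorem qpow_succ_right (f : QPlane A) (m : ℕ) :
    qpow q f (m + 1) = qmul q (qpow q f m) f := by
  induction m with
  | zero =>
    show qmul q f (qpow q f 0) = qmul q (qpow q f 0) f
    show qmul q f (Finsupp.single (0,0) 1) = qmul q (Finsupp.single (0,0) 1) f
    rw [qmul_one_left, qmul_one_right]
  | succ m ih =>
    show qmul q f (qpow q f (m + 1)) = qmul q (qpow q f (m + 1)) f
    conv_lhs => rw [ih]
    rw [← qmul_assoc]
    rfl

theorem qpow_one (f : QPlane A) : qpow q f 1 = f := by
  show qmul q f (Finsupp.single (0, 0) 1) = f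
  exact qmul_one_right q f

/-- coefficient extraction lemmas -/
theorem app_single_left (s : ℕ × ℕ) (x : A) (f : QPlane A) (p : ℕ × ℕ) :
    qmul q (Finsupp.single s x) f (s.1 + p.1, s.2 + p.2) = q ^ (s.2 * p.1) • (x * f p) := by
  induction f using Finsupp.induction with
  | zero => simp
  | single_add r β f _ _ ihf =>
    rw [qmul_add_right, Finsupp.add_apply, ihf, qmul_single_single, Finsupp.add_apply,
      mul_add, smul_add]
    congr 1
    rw [Finsupp.single_apply, Finsupp.single_apply]
    by_cases hc : r = p
    · subst hc
      rw [if_pos rfl, if_pos rfl]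
    · rw [if_neg (by
        intro hh
        apply hc
        injection hh with h1 h2
        exact Prod.ext (by omega) (by omega)), if_neg hc, mul_zero, smul_zero]

theorem app_single_left_ne (s : ℕ × ℕ) (x : A) (f : QPlane A) (p : ℕ × ℕ)
    (h : ∀ r : ℕ × ℕ, (s.1 + r.1, s.2 + r.2) ≠ p) :
    qmul q (Finsupp.single s x) f p = 0 := by
  induction f using Finsupp.induction with
  | zero => simp
  | single_add r β f _ _ ihf =>
    rw [qmul_add_right, Finsupp.add_apply, ihf, qmul_single_single, add_zero,
      Finsupp.single_apply, if_neg (h r)]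

theorem app_A (x : A) (f : QPlane A) (p : ℕ × ℕ) :
    qmul q (Finsupp.single (0, 0) x) f p = x * f p := by
  have := app_single_left q (0, 0) x f p
  simpa using this

theorem app_X (x : A) (f : QPlane A) (i j : ℕ) :
    qmul q (Finsupp.single (1, 0) x) f (i + 1, j) = x * f (i, j) := by
  have := app_single_left q (1, 0) x f (i, j)
  simpa [add_comm 1 i] using this

theorem app_X0 (x : A) (f : QPlane A) (j : ℕ) :
    qmul q (Finsupp.single (1, 0) x) f (0, j) = 0 :=
  app_single_left_ne q _ _ _ _ (by intro r hh; injection hh with h1 h2; omega)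

theorem app_Y (x : A) (f : QPlane A) (i j : ℕ) :
    qmul q (Finsupp.single (0, 1) x) f (i, j + 1) = q ^ i • (x * f (i, j)) := by
  have := app_single_left q (0, 1) x f (i, j)
  simpa [add_comm 1 j] using this

theorem app_Y0 (x : A) (f : QPlane A) (i : ℕ) :
    qmul q (Finsupp.single (0, 1) x) f (i, 0) = 0 :=
  app_single_left_ne q _ _ _ _ (by intro r hh; injection hh with h1 h2; omega)

theorem app_Ybar (f : QPlane A) (i j : ℕ) :
    qmul q f (Finsupp.single (0, 1) (1 : A)) (i, j + 1) = f (i, j) := by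
  induction f using Finsupp.induction with
  | zero => simp
  | single_add r β f _ _ ihf =>
    rw [qmul_add_left, Finsupp.add_apply, ihf, qmul_single_single, Finsupp.add_apply]
    congr 1
    simp only [mul_zero, pow_zero, one_smul, mul_one, add_zero]
    rw [Finsupp.single_apply, Finsupp.single_apply]
    by_cases hc : r = (i, j)
    · subst hc
      rw [if_pos rfl, if_pos rfl]
    · rw [if_neg (by
        intro hh
        apply hc
        injection hh with h1 h2
        exact Prod.ext (by omega) (by omega)), if_neg hc]
/-! ### The `Ξ` twist: multiply the coefficient of `X^i Y^j` by `q^i`. -/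

noncomputable def xi (f : QPlane A) : QPlane A :=
  f.sum fun p α => Finsupp.single p (q ^ p.1 • α)

@[simp] theorem xi_zero : xi q (0 : QPlane A) = 0 := by simp [xi]

theorem xi_single (p : ℕ × ℕ) (α : A) :
    xi q (Finsupp.single p α) = Finsupp.single p (q ^ p.1 • α) := by
  unfold xi
  rw [Finsupp.sum_single_index]
  simp

theorem xi_add (f g : QPlane A) : xi q (f + g) = xi q f + xi q g := by
  unfold xi
  apply Finsupp.sum_add_index'
  · intro p; simp
  · intro p α β; rw [smul_add, Finsupp.single_add]

theorem xi_apply (f : QPlane A) (p : ℕ × ℕ) : xi q f p = q ^ p.1 • f p := by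
  induction f using Finsupp.induction with
  | zero => simp
  | single_add r β f _ _ ihf =>
    rw [xi_add, Finsupp.add_apply, ihf, Finsupp.add_apply, smul_add, xi_single]
    congr 1
    rw [Finsupp.single_apply, Finsupp.single_apply]
    by_cases hc : r = p
    · subst hc; rw [if_pos rfl, if_pos rfl]
    · rw [if_neg hc, if_neg hc, smul_zero]

theorem xi_qmul (f g : QPlane A) : xi q (qmul q f g) = qmul q (xi q f) (xi q g) := by
  induction f using Finsupp.induction with
  | zero => simp
  | single_add p α f _ _ ihf =>
    rw [qmul_add_left, xi_add, xi_add, qmul_add_left, ihf]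
    congr 1
    clear ihf
    induction g using Finsupp.induction with
    | zero => simp
    | single_add r β g _ _ ihg =>
      rw [qmul_add_right, xi_add, xi_add, qmul_add_right, ihg]
      congr 1
      rw [qmul_single_single, xi_single, xi_single, xi_single, qmul_single_single]
      simp only [smul_mul_assoc, mul_smul_comm, smul_smul, ← pow_add]
      congr 2
      ring

theorem xi_one : xi q (Finsupp.single (0, 0) (1 : A)) = Finsupp.single (0, 0) (1 : A) := by
  rw [xi_single]; simp

theorem xi_qpow (f : QPlane A) (m : ℕ) : xi q (qpow q f m) = qpow q (xi q f) m := by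
  induction m with
  | zero => exact xi_one q
  | succ m ih =>
    show xi q (qmul q f (qpow q f m)) = qmul q (xi q f) (qpow q (xi q f) m)
    rw [xi_qmul, ih]
/-! ### The generators -/

noncomputable def gen (x y : A) : QPlane A :=
  Finsupp.single (1, 0) x + Finsupp.single (0, 1) y

theorem xi_gen (x y : A) : xi q (gen x y) = gen (q • x) y := by
  unfold gen
  rw [xi_add, xi_single, xi_single]
  simp

section Rel

variable {q : ℂ} {a b c d : A}

theorem AP_comm (hba : b * a = q • (a * b)) :
    q • qmul q (Finsupp.single (0, 0) a) (gen a b)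
      = qmul q (gen (q • a) b) (Finsupp.single (0, 0) a) := by
  unfold gen
  rw [qmul_add_right, qmul_add_left, qmul_single_single, qmul_single_single,
    qmul_single_single, qmul_single_single, smul_add]
  simp only [Finsupp.smul_single, mul_zero, mul_one, zero_mul, one_mul, pow_zero, pow_one,
    one_smul, zero_add, add_zero, smul_mul_assoc]
  rw [hba]

theorem CP_comm (hca : c * a = q • (a * c)) (hbc : b * c = c * b) :
    qmul q (Finsupp.single (0, 0) c) (gen a b)
      = qmul q (gen (q • a) b) (Finsupp.single (0, 0) c) := by
  unfold gen
  rw [qmul_add_right, qmul_add_left, qmul_single_single, qmul_single_single,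
    qmul_single_single, qmul_single_single]
  simp only [mul_zero, mul_one, zero_mul, one_mul, pow_zero, pow_one,
    one_smul, zero_add, add_zero, smul_mul_assoc]
  rw [hca, ← hbc]

theorem YbarQ_comm :
    qmul q (Finsupp.single (0, 1) (1 : A)) (gen c d)
      = qmul q (gen (q • c) d) (Finsupp.single (0, 1) (1 : A)) := by
  unfold gen
  rw [qmul_add_right, qmul_add_left, qmul_single_single, qmul_single_single,
    qmul_single_single, qmul_single_single]
  simp only [mul_zero, mul_one, zero_mul, one_mul, pow_zero, pow_one,
    one_smul, zero_add, add_zero, Finsupp.smul_single, smul_mul_assoc]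

theorem QP_comm (hq : q ≠ 0) (hca : c * a = q • (a * c)) (hdb : d * b = q • (b * d))
    (hbc : b * c = c * b)
    (hdet' : a * d - q⁻¹ • (b * c) = d * a - q • (b * c)) :
    qmul q (gen c d) (gen a b) = q • qmul q (gen a b) (gen c d) := by
  have hda : d * a = a * d - q⁻¹ • (b * c) + q • (b * c) := by
    rw [hdet']; abel
  have h2 : q • (d * a) = q • (a * d) + ((q * q) • (b * c) - b * c) := by
    rw [hda, smul_add, smul_sub, smul_smul, smul_smul, mul_inv_cancel₀ hq, one_smul]
    abel
  unfold gen
  simp only [qmul_add_left, qmul_add_right, qmul_single_single]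
  simp only [mul_zero, mul_one, zero_mul, one_mul, pow_zero, pow_one,
    one_smul, zero_add, add_zero, smul_add, Finsupp.smul_single]
  rw [hca, hdb, ← hbc, h2, Finsupp.single_add, Finsupp.single_sub, smul_smul]
  abel

theorem Qleft (hq : q ≠ 0) (hca : c * a = q • (a * c)) (hdb : d * b = q • (b * d))
    (hbc : b * c = c * b)
    (hdet' : a * d - q⁻¹ • (b * c) = d * a - q • (b * c)) (m k : ℕ) :
    qmul q (gen c d) (qmul q (qpow q (gen a b) m) (qpow q (gen c d) k))
      = q ^ m • qmul q (qpow q (gen a b) m) (qpow q (gen c d) (k + 1)) := by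
  induction m with
  | zero =>
    rw [show (qpow q (gen a b) 0 : QPlane A) = Finsupp.single (0, 0) 1 from rfl,
      qmul_one_left, qmul_one_left, pow_zero, one_smul]
    rfl
  | succ m ih =>
    show qmul q (gen c d) (qmul q (qmul q (gen a b) (qpow q (gen a b) m)) _) = _
    rw [qmul_assoc, ← qmul_assoc q (gen c d),
      QP_comm hq hca hdb hbc hdet', qmul_smul_left, qmul_assoc, ih,
      qmul_smul_right, smul_smul, ← pow_succ', ← qmul_assoc]
    rfl

theorem PI1 (hq : q ≠ 0) (hba : b * a = q • (a * b)) (hca : c * a = q • (a * c))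
    (hbc : b * c = c * b) (hdet : a * d - q⁻¹ • (b * c) = 1) :
    ∀ k m : ℕ,
      q ^ (m + 1) • qmul q (Finsupp.single (0, 0) a)
          (qmul q (qpow q (gen a b) m) (qpow q (gen c d) (k + 1)))
        - qmul q (Finsupp.single (0, 0) c)
          (qmul q (qpow q (gen a b) (m + 1)) (qpow q (gen c d) k))
      = q • qmul q (qmul q (qpow q (gen (q • a) b) m) (qpow q (gen (q • c) d) k))
          (Finsupp.single (0, 1) (1 : A)) := by
  have core : q • qmul q (Finsupp.single (0, 0) a) (gen c d)
      - qmul q (Finsupp.single (0, 0) c) (gen a b)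
      = Finsupp.single (0, 1) (q • (1 : A)) := by
    have had : q • (a * d) = q • (1 : A) + b * c := by
      have h1 : a * d = 1 + q⁻¹ • (b * c) := by rw [← hdet]; abel
      rw [h1, smul_add, smul_smul, mul_inv_cancel₀ hq, one_smul]
    unfold gen
    simp only [qmul_add_right, qmul_single_single]
    simp only [mul_zero, mul_one, zero_mul, one_mul, pow_zero, pow_one,
      one_smul, zero_add, add_zero, smul_add, Finsupp.smul_single]
    rw [hca, ← hbc, had, Finsupp.single_add]
    abel
  intro k
  induction k with
  | zero =>
    intro m
    induction m with
    | zero =>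
      simp only [Nat.zero_add]
      rw [show (qpow q (gen a b) 0 : QPlane A) = Finsupp.single (0, 0) 1 from rfl,
        show (qpow q (gen c d) 0 : QPlane A) = Finsupp.single (0, 0) 1 from rfl,
        show (qpow q (gen (q • a) b) 0 : QPlane A) = Finsupp.single (0, 0) 1 from rfl,
        show (qpow q (gen (q • c) d) 0 : QPlane A) = Finsupp.single (0, 0) 1 from rfl,
        qpow_one, qpow_one, qmul_one_left q (gen c d), qmul_one_right q (gen a b),
        qmul_one_left q (Finsupp.single (0, 0) (1 : A)),
        qmul_one_left q (Finsupp.single (0, 1) (1 : A)), pow_one, core]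
      simp
    | succ m ihm =>
      have e1 : qmul q (qpow q (gen a b) (m + 1)) (qpow q (gen c d) (0 + 1))
          = qmul q (qmul q (Finsupp.single (0, 0) a) (gen a b))
              (qmul q (qpow q (gen a b) m) (qpow q (gen c d) (0 + 1))) → True := fun _ => trivial
      -- Term 1 manipulation
      have t1 : q ^ (m + 1 + 1) • qmul q (Finsupp.single (0, 0) a)
            (qmul q (qpow q (gen a b) (m + 1)) (qpow q (gen c d) (0 + 1)))
          = qmul q (gen (q • a) b) (q ^ (m + 1) • qmul q (Finsupp.single (0, 0) a)
              (qmul q (qpow q (gen a b) m) (qpow q (gen c d) (0 + 1)))) := by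
        rw [show (qpow q (gen a b) (m + 1) : QPlane A)
            = qmul q (gen a b) (qpow q (gen a b) m) from rfl]
        rw [qmul_assoc, ← qmul_assoc q (Finsupp.single (0, 0) a) (gen a b)]
        rw [show (q : ℂ) ^ (m + 1 + 1) = q ^ (m + 1) * q from by ring, mul_smul]
        rw [← qmul_smul_left, AP_comm hba, qmul_assoc, qmul_smul_right]
      have t2 : qmul q (Finsupp.single (0, 0) c)
            (qmul q (qpow q (gen a b) (m + 1 + 1)) (qpow q (gen c d) 0))
          = qmul q (gen (q • a) b) (qmul q (Finsupp.single (0, 0) c)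
              (qmul q (qpow q (gen a b) (m + 1)) (qpow q (gen c d) 0))) := by
        rw [show (qpow q (gen a b) (m + 1 + 1) : QPlane A)
            = qmul q (gen a b) (qpow q (gen a b) (m + 1)) from rfl]
        rw [qmul_assoc, ← qmul_assoc q (Finsupp.single (0, 0) c) (gen a b),
          CP_comm hca hbc, qmul_assoc]
      rw [t1, t2, ← qmul_sub_right, ihm, qmul_smul_right, ← qmul_assoc, ← qmul_assoc]
      rfl
  | succ k ihk =>
    intro m
    have t1 : q ^ (m + 1) • qmul q (Finsupp.single (0, 0) a)
          (qmul q (qpow q (gen a b) m) (qpow q (gen c d) (k + 1 + 1)))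
        = qmul q (q ^ (m + 1) • qmul q (Finsupp.single (0, 0) a)
            (qmul q (qpow q (gen a b) m) (qpow q (gen c d) (k + 1)))) (gen c d) := by
      rw [qpow_succ_right q (gen c d) (k + 1),
        ← qmul_assoc q (qpow q (gen a b) m) (qpow q (gen c d) (k + 1)) (gen c d),
        ← qmul_assoc q (Finsupp.single (0, 0) a), qmul_smul_left]
    have t2 : qmul q (Finsupp.single (0, 0) c)
          (qmul q (qpow q (gen a b) (m + 1)) (qpow q (gen c d) (k + 1)))
        = qmul q (qmul q (Finsupp.single (0, 0) c)
            (qmul q (qpow q (gen a b) (m + 1)) (qpow q (gen c d) k))) (gen c d) := by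
      rw [qpow_succ_right q (gen c d) k,
        ← qmul_assoc q (qpow q (gen a b) (m + 1)) (qpow q (gen c d) k) (gen c d),
        ← qmul_assoc q (Finsupp.single (0, 0) c)]
    rw [t1, t2, ← qmul_sub_left, ihk m, qmul_smul_left, qmul_assoc, YbarQ_comm,
      ← qmul_assoc, qmul_assoc q (qpow q (gen (q • a) b) m), ← qpow_succ_right]
theorem tilde_eq (m k : ℕ) :
    qmul q (qpow q (gen (q • a) b) m) (qpow q (gen (q • c) d) k)
      = xi q (qmul q (qpow q (gen a b) m) (qpow q (gen c d) k)) := by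
  rw [xi_qmul, xi_qpow, xi_qpow, xi_gen, xi_gen]

theorem app_gen11 (x y : A) (f : QPlane A) (i j : ℕ) :
    qmul q (gen x y) f (i + 1, j + 1)
      = x * f (i, j + 1) + q ^ (i + 1) • (y * f (i + 1, j)) := by
  rw [show (gen x y : QPlane A)
      = Finsupp.single (1, 0) x + Finsupp.single (0, 1) y from rfl,
    qmul_add_left, Finsupp.add_apply, app_X, app_Y]

theorem app_gen10 (x y : A) (f : QPlane A) (i : ℕ) :
    qmul q (gen x y) f (i + 1, 0) = x * f (i, 0) := by
  rw [show (gen x y : QPlane A)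
      = Finsupp.single (1, 0) x + Finsupp.single (0, 1) y from rfl,
    qmul_add_left, Finsupp.add_apply, app_X, app_Y0, add_zero]

theorem app_gen01 (x y : A) (f : QPlane A) (j : ℕ) :
    qmul q (gen x y) f (0, j + 1) = y * f (0, j) := by
  rw [show (gen x y : QPlane A)
      = Finsupp.single (1, 0) x + Finsupp.single (0, 1) y from rfl,
    qmul_add_left, Finsupp.add_apply, app_X0, app_Y, zero_add, pow_zero, one_smul]

theorem I1_pt (hq : q ≠ 0) (hba : b * a = q • (a * b)) (hca : c * a = q • (a * c))
    (hbc : b * c = c * b) (hdet : a * d - q⁻¹ • (b * c) = 1) (m k i j : ℕ) :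
    q ^ (m + 1) • (a * qmul q (qpow q (gen a b) m) (qpow q (gen c d) (k + 1)) (i, j + 1))
      - c * qmul q (qpow q (gen a b) (m + 1)) (qpow q (gen c d) k) (i, j + 1)
      = q ^ (i + 1) • qmul q (qpow q (gen a b) m) (qpow q (gen c d) k) (i, j) := by
  have H := PI1 hq hba hca hbc hdet k m
  rw [tilde_eq] at H
  have H2 := congrArg (fun f : QPlane A => f (i, j + 1)) H
  simp only [Finsupp.sub_apply, Finsupp.smul_apply] at H2
  rw [app_A, app_A, app_Ybar, xi_apply] at H2
  rw [H2, smul_smul, ← pow_succ']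

theorem Qleft_pt (hq : q ≠ 0) (hca : c * a = q • (a * c)) (hdb : d * b = q • (b * d))
    (hbc : b * c = c * b)
    (hdet' : a * d - q⁻¹ • (b * c) = d * a - q • (b * c)) (m k i j : ℕ) :
    c * qmul q (qpow q (gen a b) m) (qpow q (gen c d) k) (i, j + 1)
      + q ^ (i + 1) • (d * qmul q (qpow q (gen a b) m) (qpow q (gen c d) k) (i + 1, j))
      = q ^ m • qmul q (qpow q (gen a b) m) (qpow q (gen c d) (k + 1)) (i + 1, j + 1) := by
  have H := Qleft hq hca hdb hbc hdet' m k
  have H2 := congrArg (fun f : QPlane A => f (i + 1, j + 1)) H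
  simp only [Finsupp.smul_apply] at H2
  rw [app_gen11] at H2
  exact H2

theorem bound_a (m : ℕ) :
    qmul q (qpow q (gen a b) (m + 1)) (qpow q (gen c d) 0) (m + 1, 0)
      = a * qmul q (qpow q (gen a b) m) (qpow q (gen c d) 0) (m, 0) := by
  rw [show (qpow q (gen a b) (m + 1) : QPlane A)
      = qmul q (gen a b) (qpow q (gen a b) m) from rfl, qmul_assoc, app_gen10]

theorem bound_d (k : ℕ) :
    qmul q (qpow q (gen a b) 0) (qpow q (gen c d) (k + 1)) (0, k + 1)
      = d * qmul q (qpow q (gen a b) 0) (qpow q (gen c d) k) (0, k) := by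
  rw [show (qpow q (gen a b) 0 : QPlane A) = Finsupp.single (0, 0) 1 from rfl,
    qmul_one_left, qmul_one_left,
    show (qpow q (gen c d) (k + 1) : QPlane A)
      = qmul q (gen c d) (qpow q (gen c d) k) from rfl, app_gen01]

theorem entry0 (m k : ℕ) :
    qmul 0 (qpow 0 (gen a b) m) (qpow 0 (gen c d) k) (m, k) = a ^ m * d ^ k := by
  induction m with
  | zero =>
    induction k with
    | zero =>
      rw [show (qpow (0 : ℂ) (gen a b) 0 : QPlane A) = Finsupp.single (0, 0) 1 from rfl,
        qmul_one_left]
      rw [show (qpow (0 : ℂ) (gen c d) 0 : QPlane A) = Finsupp.single (0, 0) 1 from rfl]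
      simp
    | succ k ihk =>
      rw [bound_d, ihk, pow_zero, one_mul, one_mul, ← pow_succ']
  | succ m ihm =>
    rw [show (qpow (0 : ℂ) (gen a b) (m + 1) : QPlane A)
        = qmul 0 (gen a b) (qpow 0 (gen a b) m) from rfl, qmul_assoc]
    match k with
    | 0 => rw [app_gen10, ihm, ← mul_assoc, ← pow_succ']
    | k + 1 =>
      rw [app_gen11, zero_pow (by omega : m + 1 ≠ 0), zero_smul, add_zero,
        ihm, ← mul_assoc, ← pow_succ']

theorem KEY (hq : q ≠ 0) (hba : b * a = q • (a * b)) (hca : c * a = q • (a * c))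
    (hdb : d * b = q • (b * d)) (hbc : b * c = c * b)
    (hdet : a * d - q⁻¹ • (b * c) = 1)
    (hdet' : a * d - q⁻¹ • (b * c) = d * a - q • (b * c)) (m k : ℕ) :
    a * qmul q (qpow q (gen a b) m) (qpow q (gen c d) (k + 1)) (m, k + 1)
      + d * qmul q (qpow q (gen a b) (m + 1)) (qpow q (gen c d) k) (m + 1, k)
    = qmul q (qpow q (gen a b) (m + 1)) (qpow q (gen c d) (k + 1)) (m + 1, k + 1)
      + qmul q (qpow q (gen a b) m) (qpow q (gen c d) k) (m, k) := by
  have e1 := I1_pt hq hba hca hbc hdet m k m k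
  have e2 := Qleft_pt hq hca hdb hbc hdet' (m + 1) k m k
  have comb : q ^ (m + 1) •
      (a * qmul q (qpow q (gen a b) m) (qpow q (gen c d) (k + 1)) (m, k + 1)
        + d * qmul q (qpow q (gen a b) (m + 1)) (qpow q (gen c d) k) (m + 1, k))
      = q ^ (m + 1) •
      (qmul q (qpow q (gen a b) (m + 1)) (qpow q (gen c d) (k + 1)) (m + 1, k + 1)
        + qmul q (qpow q (gen a b) m) (qpow q (gen c d) k) (m, k)) := by
    rw [smul_add, smul_add]
    have := congrArg₂ (· + ·) e1 e2
    rw [sub_add_eq_add_sub] at this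
    -- this : q^{m+1}•(a*X) + (c*Y + q^{m+1}•(d*V)) - c*Y = q^{i+1}•Z + q^{m+1}•W
    calc q ^ (m + 1) • (a * _) + q ^ (m + 1) • (d * _)
        = (q ^ (m + 1) • (a * qmul q (qpow q (gen a b) m) (qpow q (gen c d) (k + 1)) (m, k + 1))
            + (c * qmul q (qpow q (gen a b) (m + 1)) (qpow q (gen c d) k) (m, k + 1)
              + q ^ (m + 1) • (d * qmul q (qpow q (gen a b) (m + 1)) (qpow q (gen c d) k) (m + 1, k))))
          - c * qmul q (qpow q (gen a b) (m + 1)) (qpow q (gen c d) k) (m, k + 1) := by abel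
      _ = q ^ (m + 1) • qmul q (qpow q (gen a b) m) (qpow q (gen c d) k) (m, k)
            + q ^ (m + 1) • qmul q (qpow q (gen a b) (m + 1)) (qpow q (gen c d) (k + 1)) (m + 1, k + 1) := by
          rw [e2]
          rw [show q ^ (m + 1) • (a * qmul q (qpow q (gen a b) m) (qpow q (gen c d) (k + 1)) (m, k + 1))
              = q ^ (m + 1) • qmul q (qpow q (gen a b) m) (qpow q (gen c d) k) (m, k)
                + c * qmul q (qpow q (gen a b) (m + 1)) (qpow q (gen c d) k) (m, k + 1) from by
            rw [← e1]; abel]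
          abel
      _ = _ := by abel
  have hpow : (q : ℂ) ^ (m + 1) ≠ 0 := pow_ne_zero _ hq
  have := congrArg (fun x : A => (q ^ (m + 1))⁻¹ • x) comb
  simpa [inv_smul_smul₀ hpow] using this

theorem KEY_all (hba : b * a = q • (a * b)) (hca : c * a = q • (a * c))
    (hdb : d * b = q • (b * d)) (hbc : b * c = c * b)
    (hdet : a * d - q⁻¹ • (b * c) = 1)
    (hdet' : a * d - q⁻¹ • (b * c) = d * a - q • (b * c)) (m k : ℕ) :
    a * qmul q (qpow q (gen a b) m) (qpow q (gen c d) (k + 1)) (m, k + 1)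
      + d * qmul q (qpow q (gen a b) (m + 1)) (qpow q (gen c d) k) (m + 1, k)
    = qmul q (qpow q (gen a b) (m + 1)) (qpow q (gen c d) (k + 1)) (m + 1, k + 1)
      + qmul q (qpow q (gen a b) m) (qpow q (gen c d) k) (m, k) := by
  by_cases hq : q = 0
  · subst hq
    have had : a * d = 1 := by
      rw [← hdet]; simp
    have hda : d * a = 1 := by
      have h2 := hdet'
      simp only [inv_zero, zero_smul, sub_zero] at h2
      rw [← h2, had]
    rw [entry0, entry0, entry0, entry0]
    have hL1 : a * (a ^ m * d ^ (k + 1)) = a ^ (m + 1) * d ^ (k + 1) := by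
      rw [← mul_assoc, ← pow_succ']
    have hL2 : d * (a ^ (m + 1) * d ^ k) = a ^ m * d ^ k := by
      rw [← mul_assoc]
      have : d * a ^ (m + 1) = a ^ m := by
        rw [pow_succ', ← mul_assoc, hda, one_mul]
      rw [this]
    rw [hL1, hL2]
  · exact KEY hq hba hca hdb hbc hdet hdet' m k
theorem main_rec (hba : b * a = q • (a * b)) (hca : c * a = q • (a * c))
    (hdb : d * b = q • (b * d)) (hbc : b * c = c * b)
    (hdet : a * d - q⁻¹ • (b * c) = 1)
    (hdet' : a * d - q⁻¹ • (b * c) = d * a - q • (b * c)) (n : ℕ) :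
    (∑ u ∈ Finset.range (n + 3),
        qmul q (qpow q (gen a b) (n + 2 - u)) (qpow q (gen c d) u) (n + 2 - u, u))
      + ∑ u ∈ Finset.range (n + 1),
          qmul q (qpow q (gen a b) (n - u)) (qpow q (gen c d) u) (n - u, u)
    = a * (∑ u ∈ Finset.range (n + 2),
        qmul q (qpow q (gen a b) (n + 1 - u)) (qpow q (gen c d) u) (n + 1 - u, u))
      + d * ∑ u ∈ Finset.range (n + 2),
          qmul q (qpow q (gen a b) (n + 1 - u)) (qpow q (gen c d) u) (n + 1 - u, u) := by
  set E : ℕ → ℕ → A := fun N u =>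
    qmul q (qpow q (gen a b) (N - u)) (qpow q (gen c d) u) (N - u, u) with hE
  have ha : a * (∑ u ∈ Finset.range (n + 2), E (n + 1) u)
      = (∑ u ∈ Finset.range (n + 1), a * E (n + 1) (u + 1)) + a * E (n + 1) 0 := by
    rw [Finset.mul_sum, Finset.sum_range_succ']
  have hd : d * (∑ u ∈ Finset.range (n + 2), E (n + 1) u)
      = (∑ u ∈ Finset.range (n + 1), d * E (n + 1) u) + d * E (n + 1) (n + 1) := by
    rw [Finset.mul_sum, Finset.sum_range_succ]
  have hT2 : (∑ u ∈ Finset.range (n + 3), E (n + 2) u)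
      = ((∑ u ∈ Finset.range (n + 1), E (n + 2) (u + 1)) + E (n + 2) 0)
        + E (n + 2) (n + 2) := by
    rw [Finset.sum_range_succ, Finset.sum_range_succ']
  have hkey : ∀ u ∈ Finset.range (n + 1),
      a * E (n + 1) (u + 1) + d * E (n + 1) u = E (n + 2) (u + 1) + E n u := by
    intro u hu
    have hu' : u ≤ n := by
      simpa [Nat.lt_succ_iff] using hu
    have h1 : n + 1 - (u + 1) = n - u := by omega
    have h2 : n + 1 - u = (n - u) + 1 := by omega
    have h3 : n + 2 - (u + 1) = (n - u) + 1 := by omega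
    rw [hE]
    simp only [h1, h2, h3]
    exact KEY_all hba hca hdb hbc hdet hdet' (n - u) u
  have hba' : a * E (n + 1) 0 = E (n + 2) 0 := by
    rw [hE]
    simp only [Nat.sub_zero]
    exact (bound_a (n + 1)).symm
  have hbd' : d * E (n + 1) (n + 1) = E (n + 2) (n + 2) := by
    rw [hE]
    simp only [Nat.sub_self]
    exact (bound_d (n + 1)).symm
  rw [ha, hd, hT2, hba', hbd']
  have hsum : (∑ u ∈ Finset.range (n + 1), a * E (n + 1) (u + 1))
      + (∑ u ∈ Finset.range (n + 1), d * E (n + 1) u)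
      = (∑ u ∈ Finset.range (n + 1), E (n + 2) (u + 1))
        + (∑ u ∈ Finset.range (n + 1), E n u) := by
    rw [← Finset.sum_add_distrib, ← Finset.sum_add_distrib]
    exact Finset.sum_congr rfl hkey
  calc (∑ u ∈ Finset.range (n + 1), E (n + 2) (u + 1)) + E (n + 2) 0 + E (n + 2) (n + 2)
        + ∑ u ∈ Finset.range (n + 1), E n u
      = ((∑ u ∈ Finset.range (n + 1), E (n + 2) (u + 1))
          + (∑ u ∈ Finset.range (n + 1), E n u)) + E (n + 2) 0 + E (n + 2) (n + 2) := by
        abel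
    _ = ((∑ u ∈ Finset.range (n + 1), a * E (n + 1) (u + 1))
          + (∑ u ∈ Finset.range (n + 1), d * E (n + 1) u)) + E (n + 2) 0 + E (n + 2) (n + 2) := by
        rw [hsum]
    _ = _ := by abel
end Rel

end QT

/-- For `(a, b; c, d) ∈ SL₂^q(A)`, the trace of `ρ_n` equals `S_n(a + d)`. -/
theorem traceRho_eq_chebS {A : Type*} [Ring A] [Algebra ℂ A] (q : ℂ) (a b c d : A)
    (hba : b * a = q • (a * b)) (hca : c * a = q • (a * c))
    (hdb : d * b = q • (b * d)) (hdc : d * c = q • (c * d))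
    (hbc : b * c = c * b)
    (hdet : a * d - q⁻¹ • (b * c) = 1)
    (hdet' : a * d - q⁻¹ • (b * c) = d * a - q • (b * c)) (n : ℕ) :
    traceRho q a b c d n = chebS n (a + d) := by
  have T0 : traceRho q a b c d 0 = 1 := by
    show (∑ u ∈ Finset.range 1, rhoImage q a b c d 0 u (0 - u, u)) = 1
    rw [Finset.sum_range_one]
    show qmul q (qpow q (QT.gen a b) 0) (qpow q (QT.gen c d) 0) (0, 0) = 1
    rw [show (qpow q (QT.gen a b) 0 : QPlane A) = Finsupp.single (0, 0) 1 from rfl,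
      QT.qmul_one_left,
      show (qpow q (QT.gen c d) 0 : QPlane A) = Finsupp.single (0, 0) 1 from rfl]
    simp
  have T1 : traceRho q a b c d 1 = a + d := by
    show (∑ u ∈ Finset.range 2, rhoImage q a b c d 1 u (1 - u, u)) = a + d
    rw [Finset.sum_range_succ, Finset.sum_range_one]
    have h1 : rhoImage q a b c d 1 0 (1, 0) = a := by
      show qmul q (qpow q (QT.gen a b) 1) (qpow q (QT.gen c d) 0) (1, 0) = a
      rw [QT.qpow_one,
        show (qpow q (QT.gen c d) 0 : QPlane A) = Finsupp.single (0, 0) 1 from rfl,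
        QT.qmul_one_right]
      show ((Finsupp.single (1, 0) a + Finsupp.single (0, 1) b : QPlane A)) (1, 0) = a
      rw [Finsupp.add_apply, Finsupp.single_eq_same, Finsupp.single_apply,
        if_neg (by simp), add_zero]
    have h2 : rhoImage q a b c d 1 1 (0, 1) = d := by
      show qmul q (qpow q (QT.gen a b) 0) (qpow q (QT.gen c d) 1) (0, 1) = d
      rw [QT.qpow_one,
        show (qpow q (QT.gen a b) 0 : QPlane A) = Finsupp.single (0, 0) 1 from rfl,
        QT.qmul_one_left]
      show ((Finsupp.single (1, 0) c + Finsupp.single (0, 1) d : QPlane A)) (0, 1) = d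
      rw [Finsupp.add_apply, Finsupp.single_eq_same, Finsupp.single_apply,
        if_neg (by simp), zero_add]
    rw [show (1 : ℕ) - 0 = 1 from rfl, show (1 : ℕ) - 1 = 0 from rfl] at *
    rw [h1, h2]
  have key : ∀ m : ℕ, traceRho q a b c d m = chebS m (a + d) ∧
      traceRho q a b c d (m + 1) = chebS (m + 1) (a + d) := by
    intro m
    induction m with
    | zero => exact ⟨T0, T1⟩
    | succ m ih =>
      refine ⟨ih.2, ?_⟩
      have hrec : traceRho q a b c d (m + 2) + traceRho q a b c d m
          = a * traceRho q a b c d (m + 1) + d * traceRho q a b c d (m + 1) := by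
        exact QT.main_rec hba hca hdb hbc hdet hdet' m
      have h3 : traceRho q a b c d (m + 2)
          = a * traceRho q a b c d (m + 1) + d * traceRho q a b c d (m + 1)
            - traceRho q a b c d m := by
        rw [← hrec]; abel
      rw [h3, ih.1, ih.2,
        show chebS (m + 2) (a + d)
          = (a + d) * chebS (m + 1) (a + d) - chebS m (a + d) from rfl, add_mul]
  exact (key n).1
end
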